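/- For every fixed $\sigma \geq 0$, the function $h \mapsto \mathbb{E}[\operatorname{sech}^2(h + \sigma Z)]$ is strictly decreasing on $[0, \infty)$, where $Z$ is a standard Gaussian. -/

import Mathlib

open MeasureTheory ProbabilityTheory
open scoped NNReal ENNReal Real

noncomputable def gfun (t : ℝ) : ℝ := 2 * Real.sinh t * ((Real.cosh t)⁻¹) ^ 3

lemma gfun_cont : Continuous gfun := by
  unfold gfun
  exact (continuous_const.mul Real.continuous_sinh).mul
    ((Real.continuous_cosh.inv₀ fun x => (Real.cosh_pos (x := x)).ne').pow 3)

lemma gfun_odd (t : ℝ) : gfun (-t) = -gfun t := by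
  simp [gfun, Real.sinh_neg, Real.cosh_neg]

lemma gfun_nonneg {t : ℝ} (ht : 0 ≤ t) : 0 ≤ gfun t := by
  have h1 : (0:ℝ) ≤ Real.sinh t := Real.sinh_nonneg_iff.2 ht
  have h2 : (0:ℝ) ≤ ((Real.cosh t)⁻¹) ^ 3 := by positivity
  unfold gfun; positivity

lemma gfun_pos {t : ℝ} (ht : 0 < t) : 0 < gfun t := by
  have h1 : (0:ℝ) < Real.sinh t := Real.sinh_pos_iff.2 ht
  have h2 : (0:ℝ) < ((Real.cosh t)⁻¹) ^ 3 := by positivity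
  unfold gfun; positivity

lemma gfun_abs_le (t : ℝ) : |gfun t| ≤ 2 := by
  have hc : (0:ℝ) < Real.cosh t := Real.cosh_pos t
  have h1 : |Real.sinh t| ≤ Real.cosh t := by
    rw [Real.abs_sinh, ← Real.cosh_abs]
    exact (Real.sinh_lt_cosh _).le
  have hinv : (0:ℝ) ≤ (Real.cosh t)⁻¹ := by positivity
  have hinvle : (Real.cosh t)⁻¹ ≤ 1 := by
    rw [inv_le_one_iff₀]; right; exact Real.one_le_cosh t
  have hmul : Real.cosh t * (Real.cosh t)⁻¹ = 1 := mul_inv_cancel₀ hc.ne'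
  have : |gfun t| = 2 * |Real.sinh t| * ((Real.cosh t)⁻¹) ^ 3 := by
    unfold gfun
    rw [abs_mul, abs_mul, abs_pow, abs_of_nonneg hinv]
    norm_num
  rw [this]
  have hsi : |Real.sinh t| * (Real.cosh t)⁻¹ ≤ 1 := by
    calc |Real.sinh t| * (Real.cosh t)⁻¹ ≤ Real.cosh t * (Real.cosh t)⁻¹ :=
          mul_le_mul_of_nonneg_right h1 hinv
    _ = 1 := hmul
  have hi2 : ((Real.cosh t)⁻¹) ^ 2 ≤ 1 := by nlinarith
  nlinarith [mul_le_mul hsi hi2 (by positivity) zero_le_one, abs_nonneg (Real.sinh t)]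

lemma hasDeriv_sech2 (c : ℝ) (x : ℝ) :
    HasDerivAt (fun h : ℝ => ((Real.cosh (h + c))⁻¹) ^ 2) (-(gfun (x + c))) x := by
  have h1 : HasDerivAt (fun h : ℝ => h + c) 1 x := (hasDerivAt_id x).add_const c
  have h2 : HasDerivAt (fun h : ℝ => Real.cosh (h + c)) (Real.sinh (x + c) * 1) x :=
    h1.cosh
  have h3 := h2.inv (Real.cosh_pos (x := x + c)).ne'
  have h4 := h3.fun_pow 2
  refine h4.congr_deriv ?_
  have hc : Real.cosh (x + c) ≠ 0 := (Real.cosh_pos (x := x + c)).ne'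
  simp only [gfun, Pi.inv_apply, pow_one, mul_one, div_eq_mul_inv, ← inv_pow, Nat.cast_ofNat]
  ring

lemma hasDeriv_F (σ : ℝ) (x : ℝ) :
    HasDerivAt (fun h : ℝ => ∫ z, ((Real.cosh (h + σ * z))⁻¹) ^ 2 ∂(gaussianReal 0 1))
      (∫ z, -(gfun (x + σ * z)) ∂(gaussianReal 0 1)) x := by
  have γ := gaussianReal (0:ℝ) 1
  have key := hasDerivAt_integral_of_dominated_loc_of_deriv_le
    (μ := gaussianReal 0 1) (F := fun h z => ((Real.cosh (h + σ * z))⁻¹) ^ 2)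
    (F' := fun h z => -(gfun (h + σ * z))) (x₀ := x) (bound := fun _ => 2)
    (s := Metric.ball x 1) (Metric.ball_mem_nhds x one_pos)
    ?_ ?_ ?_ ?_ ?_ ?_
  · exact key.2
  · refine Filter.Eventually.of_forall fun h => ?_
    exact (Continuous.aestronglyMeasurable (by
      exact ((Real.continuous_cosh.comp (continuous_const.add
        (continuous_const.mul continuous_id))).inv₀
        (fun z => (Real.cosh_pos _).ne')).pow 2))
  · refine (integrable_const (1:ℝ)).mono' ?_ ?_
    · exact (Continuous.aestronglyMeasurable (by
        exact ((Real.continuous_cosh.comp (continuous_const.add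
          (continuous_const.mul continuous_id))).inv₀
          (fun z => (Real.cosh_pos _).ne')).pow 2))
    · refine Filter.Eventually.of_forall fun z => ?_
      have hc : (1:ℝ) ≤ Real.cosh (x + σ * z) := Real.one_le_cosh _
      have hinv : (Real.cosh (x + σ * z))⁻¹ ≤ 1 := by
        rw [inv_le_one_iff₀]; right; exact hc
      have hinv0 : (0:ℝ) ≤ (Real.cosh (x + σ * z))⁻¹ := by positivity
      rw [Real.norm_eq_abs, abs_of_nonneg (by positivity)]
      nlinarith
  · exact (Continuous.aestronglyMeasurable (by
      exact (gfun_cont.comp (continuous_const.add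
        (continuous_const.mul continuous_id))).neg))
  · refine Filter.Eventually.of_forall fun z h _ => ?_
    rw [norm_neg, Real.norm_eq_abs]
    exact gfun_abs_le _
  · exact integrable_const 2
  · refine Filter.Eventually.of_forall fun z h _ => ?_
    exact hasDeriv_sech2 (σ * z) h

lemma pdf_neg (x : ℝ) (v : ℝ≥0) (t : ℝ) :
    gaussianPDFReal x v (-t) = gaussianPDFReal (-x) v t := by
  unfold gaussianPDFReal
  congr 2
  ring

lemma pdf_le {x : ℝ} (hx : 0 ≤ x) {v : ℝ≥0} (hv : v ≠ 0) {t : ℝ} (ht : 0 ≤ t) :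
    gaussianPDFReal x v (-t) ≤ gaussianPDFReal x v t := by
  have hv0 : (0:ℝ) < (v:ℝ) := by exact_mod_cast zero_lt_iff.2 hv
  unfold gaussianPDFReal
  have hsqrt : (0:ℝ) ≤ (Real.sqrt (2 * Real.pi * v))⁻¹ := by positivity
  refine mul_le_mul_of_nonneg_left (Real.exp_le_exp.2 ?_) hsqrt
  have hsq : -(-t - x)^2 ≤ -(t - x)^2 := by nlinarith
  have h2v : (0:ℝ) < 2 * (v:ℝ) := by linarith
  exact (div_le_div_iff_of_pos_right h2v).2 hsq

lemma pdf_lt {x : ℝ} (hx : 0 < x) {v : ℝ≥0} (hv : v ≠ 0) {t : ℝ} (ht : 0 < t) :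
    gaussianPDFReal x v (-t) < gaussianPDFReal x v t := by
  have hv0 : (0:ℝ) < (v:ℝ) := by exact_mod_cast zero_lt_iff.2 hv
  unfold gaussianPDFReal
  have hsqrt : (0:ℝ) < (Real.sqrt (2 * Real.pi * v))⁻¹ := by
    refine inv_pos.2 (Real.sqrt_pos.2 ?_)
    have := Real.pi_pos
    nlinarith
  refine mul_lt_mul_of_pos_left (Real.exp_lt_exp.2 ?_) hsqrt
  have hsq : -(-t - x)^2 < -(t - x)^2 := by nlinarith
  have h2v : (0:ℝ) < 2 * (v:ℝ) := by linarith
  exact (div_lt_div_iff_of_pos_right h2v).2 hsq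

lemma key_pos {σ : ℝ} (hσ : 0 < σ) {x : ℝ} (hx : 0 < x) :
    0 < ∫ z, gfun (x + σ * z) ∂(gaussianReal 0 1) := by
  set v : ℝ≥0 := NNReal.mk (σ ^ 2) (sq_nonneg σ) * 1 with hvdef
  have hv : v ≠ 0 := by
    rw [hvdef, mul_one]
    intro h
    have h2 : ((NNReal.mk (σ ^ 2) (sq_nonneg σ)) : ℝ) = 0 := by rw [h]; simp
    simp only [NNReal.coe_mk] at h2
    nlinarith
  have hmap : (gaussianReal 0 1).map (fun z => x + σ * z) = gaussianReal x v := by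
    have hcomp : (fun z : ℝ => x + σ * z) = (fun y : ℝ => x + y) ∘ (fun z : ℝ => σ * z) := rfl
    rw [hcomp, ← Measure.map_map (measurable_const_add x) (measurable_const_mul σ)]
    have h1 : (gaussianReal 0 1).map (fun z : ℝ => σ * z) = gaussianReal 0 v := by
      have := gaussianReal_map_const_mul (μ := 0) (v := 1) σ
      simpa [hvdef] using this
    rw [h1]
    have h2 := gaussianReal_map_const_add (μ := 0) (v := v) x
    simpa using h2
  have hint1 : ∫ z, gfun (x + σ * z) ∂(gaussianReal 0 1) = ∫ t, gfun t ∂(gaussianReal x v) := by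
    rw [← hmap, integral_map (by fun_prop) gfun_cont.aestronglyMeasurable]
  set p : ℝ → ℝ := gaussianPDFReal x v with hp
  have hint2 : ∫ t, gfun t ∂(gaussianReal x v) = ∫ t, gfun t * p t := by
    rw [gaussianReal_of_var_ne_zero x hv, gaussianPDF_def]
    have hrw : (fun t => ENNReal.ofReal (gaussianPDFReal x v t))
        = fun t => ((Real.toNNReal (gaussianPDFReal x v t) : ℝ≥0) : ℝ≥0∞) := rfl
    rw [hrw, integral_withDensity_eq_integral_smul
      ((measurable_gaussianPDFReal x v).real_toNNReal) gfun]
    congr 1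
    funext t
    rw [NNReal.smul_def, smul_eq_mul, Real.coe_toNNReal _ (gaussianPDFReal_nonneg x v t),
      mul_comm]
  have hbdd : ∃ C, ∀ t : ℝ, ‖gfun t‖ ≤ C := ⟨2, fun t => by
    rw [Real.norm_eq_abs]; exact gfun_abs_le t⟩
  have int1 : Integrable (fun t => gfun t * p t) := by
    exact (integrable_gaussianPDFReal x v).bdd_mul gfun_cont.aestronglyMeasurable (ae_of_all _ hbdd.choose_spec)
  have hpneg : (fun t : ℝ => p (-t)) = gaussianPDFReal (-x) v := by
    funext t; rw [hp]; exact pdf_neg x v t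
  have int2 : Integrable (fun t => gfun t * p (-t)) := by
    rw [show (fun t => gfun t * p (-t)) = fun t => gfun t * gaussianPDFReal (-x) v t by
      funext t; rw [← hpneg]]
    exact (integrable_gaussianPDFReal (-x) v).bdd_mul gfun_cont.aestronglyMeasurable (ae_of_all _ hbdd.choose_spec)
  set I : ℝ := ∫ t, gfun t * p t with hI
  have reflect : I = - ∫ t, gfun t * p (-t) := by
    have h1 : ∫ t, gfun (-t) * p (-(-t)) = ∫ t, gfun t * p (-t) :=
      integral_neg_eq_self (fun t => gfun t * p (-t)) volume
    have h2 : (fun t => gfun (-t) * p (-(-t))) = fun t => -(gfun t * p t) := by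
      funext t; rw [gfun_odd, neg_neg]; ring
    rw [h2] at h1
    rw [integral_neg] at h1
    rw [hI, ← h1, neg_neg]
  have hE : ∫ t, gfun t * (p t - p (-t)) = 2 * I := by
    have : (fun t => gfun t * (p t - p (-t)))
        = fun t => gfun t * p t - gfun t * p (-t) := by funext t; ring
    rw [this, integral_sub int1 int2]
    have hr := reflect
    rw [hI] at hr ⊢
    linarith
  have hpos : 0 < ∫ t, gfun t * (p t - p (-t)) := by
    have hnonneg : (0 : ℝ → ℝ) ≤ fun t => gfun t * (p t - p (-t)) := by
      intro t
      show (0:ℝ) ≤ gfun t * (p t - p (-t))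
      rcases le_total 0 t with ht | ht
      · exact mul_nonneg (gfun_nonneg ht) (sub_nonneg.2 (pdf_le hx.le hv ht))
      · have h1 : gfun t ≤ 0 := by
          have := gfun_nonneg (neg_nonneg.2 ht)
          rw [gfun_odd] at this; linarith
        have h2 : p t - p (-t) ≤ 0 := by
          have := pdf_le hx.le hv (neg_nonneg.2 ht)
          rw [neg_neg] at this
          simpa [hp] using sub_nonpos.2 this
        nlinarith [mul_nonneg (neg_nonneg.2 h1) (neg_nonneg.2 h2)]
    have hinteg : Integrable (fun t => gfun t * (p t - p (-t))) := by
      have : (fun t => gfun t * (p t - p (-t)))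
          = fun t => gfun t * p t - gfun t * p (-t) := by funext t; ring
      rw [this]; exact int1.sub int2
    rw [integral_pos_iff_support_of_nonneg hnonneg hinteg]
    have hsub : Set.Ioi (0:ℝ) ⊆ Function.support fun t => gfun t * (p t - p (-t)) := by
      intro t ht
      have h1 : 0 < gfun t := gfun_pos ht
      have h2 : 0 < p t - p (-t) := sub_pos.2 (pdf_lt hx hv ht)
      exact ne_of_gt (mul_pos h1 h2)
    calc (0:ℝ≥0∞) < volume (Set.Ioi (0:ℝ)) := by simp [Real.volume_Ioi]
    _ ≤ _ := measure_mono hsub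
  rw [hint1, hint2]
  linarith

theorem stmt_9 (σ : ℝ) (hσ : 0 ≤ σ) :
    StrictAntiOn
      (fun h : ℝ => ∫ z, ((Real.cosh (h + σ * z))⁻¹) ^ 2 ∂(gaussianReal 0 1))
      (Set.Ici (0 : ℝ)) := by
  rcases hσ.eq_or_lt with h0 | hpos
  · subst h0
    intro a ha b hb hab
    simp only [Set.mem_Ici] at ha hb
    simp only [zero_mul, add_zero, integral_const, measure_univ, probReal_univ, ENNReal.toReal_one,
      smul_eq_mul, one_mul]
    have hab' : Real.cosh a < Real.cosh b := by
      rw [Real.cosh_lt_cosh, abs_of_nonneg ha, abs_of_nonneg hb]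
      exact hab
    have h1 : (Real.cosh b)⁻¹ < (Real.cosh a)⁻¹ := by
      gcongr
    have h2 : (0:ℝ) ≤ (Real.cosh b)⁻¹ := by positivity
    exact pow_lt_pow_left₀ h1 h2 (by norm_num : (2:ℕ) ≠ 0)
  · apply strictAntiOn_of_deriv_neg (convex_Ici 0)
    · exact (continuous_iff_continuousAt.2 fun x => (hasDeriv_F σ x).continuousAt).continuousOn
    · intro x hx
      rw [interior_Ici] at hx
      rw [(hasDeriv_F σ x).deriv, integral_neg]
      simpa using key_pos hpos hx
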